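/- arXiv:2210.09607 — 2 statements merged into one kernel-verified Lean document; each statement's English description precedes it below -/
import Mathlib

section
/- Let K, A, B > 0 and let φ : (0, ∞) → [0, ∞) be a measurable function satisfying φ(t) ≤ min( A·e^{−Kt}, B·K/(e^{Kt}(e^{Kt} − 1)) ) for every t > 0. Then ∫₀^∞ φ(t) dt ≤ B·log(1 + A/(B·K)). -/
open MeasureTheory Set Filter

theorem hsi_deterministic (K A B : ℝ) (hK : 0 < K) (hA : 0 < A) (hB : 0 < B)
    (φ : ℝ → ℝ) (hmeas : Measurable φ) (hφ : ∀ t > 0, 0 ≤ φ t)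
    (hbound : ∀ t > 0,
      φ t ≤ min (A * Real.exp (-K * t)) (B * K / (Real.exp (K * t) * (Real.exp (K * t) - 1)))) :
    ∫ t in Set.Ioi (0 : ℝ), φ t ≤ B * Real.log (1 + A / (B * K)) := by
  have hden : (0:ℝ) < A + B * K := by positivity
  set c : ℝ := A / (A + B * K) with hc
  have hc0 : 0 < c := by positivity
  have hc1 : c < 1 := by
    rw [hc, div_lt_one hden]; nlinarith
  set u : ℝ := Real.log ((A + B * K) / A) / K with hu
  have hu0 : 0 < u := by
    apply div_pos _ hK
    apply Real.log_pos
    rw [lt_div_iff₀ hA]; nlinarith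
  have hKu : K * u = Real.log ((A + B * K) / A) := by
    rw [hu]; field_simp
  have hexp : Real.exp (-K * u) = c := by
    rw [neg_mul, hKu, Real.exp_neg, Real.exp_log (by positivity), hc]
    field_simp
  set g1 : ℝ → ℝ := fun t => A * Real.exp (-K * t) with hg1
  set g2 : ℝ → ℝ := fun t => B * K / (Real.exp (K * t) * (Real.exp (K * t) - 1)) with hg2
  set F : ℝ → ℝ := fun t => B * (Real.log (1 - Real.exp (-K * t)) + Real.exp (-K * t)) with hF
  have hE : ∀ t : ℝ, HasDerivAt (fun s => Real.exp (-K * s)) (Real.exp (-K * t) * (-K)) t := by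
    intro t
    have hlin : HasDerivAt (fun s : ℝ => -K * s) (-K) t := by
      simpa using (hasDerivAt_id t).const_mul (-K)
    exact hlin.exp
  -- exp(-K t) < 1 for t > 0
  have hElt : ∀ t : ℝ, 0 < t → Real.exp (-K * t) < 1 := by
    intro t ht
    rw [Real.exp_lt_one_iff]
    nlinarith
  -- derivative of F
  have hFderiv : ∀ t : ℝ, 0 < t → HasDerivAt F (g2 t) t := by
    intro t ht
    have hEt := hE t
    have hEpos : 0 < Real.exp (-K * t) := Real.exp_pos _
    have hlt := hElt t ht
    have hne : 1 - Real.exp (-K * t) ≠ 0 := by linarith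
    have h1 : HasDerivAt (fun s => 1 - Real.exp (-K * s)) (-(Real.exp (-K * t) * (-K))) t :=
      hEt.const_sub 1
    have h2 := h1.log hne
    have h3 := (h2.add hEt).const_mul B
    refine h3.congr_deriv (Eq.symm ?_)
    have hrel : Real.exp (K * t) = (Real.exp (-K * t))⁻¹ := by
      rw [← Real.exp_neg]; ring_nf
    show B * K / (Real.exp (K * t) * (Real.exp (K * t) - 1)) = _
    rw [hrel]
    have hne' : (1 : ℝ) - Real.exp (-(K * t)) ≠ 0 := by rw [← neg_mul]; exact hne
    field_simp [hne']
    ring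
  -- limit of F at infinity
  have hEtend : Tendsto (fun t => Real.exp (-K * t)) atTop (nhds 0) := by
    apply Real.tendsto_exp_atBot.comp
    have h1 : Tendsto (fun t : ℝ => K * t) atTop atTop :=
      Tendsto.const_mul_atTop hK tendsto_id
    have h2 : Tendsto (fun t : ℝ => -(K * t)) atTop atBot := tendsto_neg_atBot_iff.mpr h1
    exact h2.congr (fun t => by ring)
  have hFtend : Tendsto F atTop (nhds 0) := by
    have h1 : Tendsto (fun t => 1 - Real.exp (-K * t)) atTop (nhds 1) := by
      simpa using (tendsto_const_nhds.sub hEtend)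
    have h2 : Tendsto (fun t => Real.log (1 - Real.exp (-K * t))) atTop (nhds 0) := by
      have := (Real.continuousAt_log one_ne_zero).tendsto.comp h1
      simpa [Function.comp_def] using this
    have h3 := (h2.add hEtend).const_mul B
    rw [hF]
    convert h3 using 2
    simp
  -- nonnegativity of g2 on Ioi u
  have hg2nonneg : ∀ t ∈ Ioi u, 0 ≤ g2 t := by
    intro t ht
    have ht0 : 0 < t := lt_trans hu0 ht
    have h1 : 1 < Real.exp (K * t) := by
      rw [Real.one_lt_exp_iff]; positivity
    rw [hg2]
    have : 0 < Real.exp (K * t) * (Real.exp (K * t) - 1) := by nlinarith [Real.exp_pos (K * t)]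
    positivity
  have hFderivIci : ∀ t ∈ Ici u, HasDerivAt F (g2 t) t := fun t ht =>
    hFderiv t (lt_of_lt_of_le hu0 ht)
  -- value of the integral of g2 on Ioi u
  have hI2 : ∫ t in Ioi u, g2 t = 0 - F u :=
    integral_Ioi_of_hasDerivAt_of_nonneg' hFderivIci hg2nonneg hFtend
  have hg2int : IntegrableOn g2 (Ioi u) :=
    integrableOn_Ioi_deriv_of_nonneg' hFderivIci hg2nonneg hFtend
  -- g1 continuous and integrable on Ioc 0 u
  have hg1cont : Continuous g1 := by
    rw [hg1]; continuity
  have hg1int : IntegrableOn g1 (Ioc 0 u) := hg1cont.integrableOn_Ioc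
  -- value of integral of g1 on Ioc 0 u
  have hI1 : ∫ t in Ioc 0 u, g1 t = A / K - A / K * c := by
    rw [← intervalIntegral.integral_of_le hu0.le]
    have hG : ∀ t ∈ uIcc (0:ℝ) u, HasDerivAt (fun s => -(A / K) * Real.exp (-K * s)) (g1 t) t := by
      intro t _
      have := (hE t).const_mul (-(A / K))
      refine this.congr_deriv (Eq.symm ?_)
      rw [hg1]; field_simp
    rw [intervalIntegral.integral_eq_sub_of_hasDerivAt hG (hg1cont.intervalIntegrable 0 u)]
    rw [hexp]
    simp
    ring
  -- integrability of φ on the two pieces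
  have hφint1 : IntegrableOn φ (Ioc 0 u) := by
    apply Integrable.mono' hg1int (hmeas.aestronglyMeasurable.restrict)
    rw [ae_restrict_iff' measurableSet_Ioc]
    filter_upwards with t ht
    rw [Real.norm_eq_abs, abs_of_nonneg (hφ t ht.1)]
    exact (hbound t ht.1).trans (min_le_left _ _)
  have hφint2 : IntegrableOn φ (Ioi u) := by
    apply Integrable.mono' hg2int (hmeas.aestronglyMeasurable.restrict)
    rw [ae_restrict_iff' measurableSet_Ioi]
    filter_upwards with t ht
    have ht0 : 0 < t := lt_trans hu0 ht
    rw [Real.norm_eq_abs, abs_of_nonneg (hφ t ht0)]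
    exact (hbound t ht0).trans (min_le_right _ _)
  -- split the integral
  have hsplit : ∫ t in Ioi (0:ℝ), φ t = (∫ t in Ioc 0 u, φ t) + ∫ t in Ioi u, φ t := by
    rw [← setIntegral_union (Ioc_disjoint_Ioi le_rfl) measurableSet_Ioi hφint1 hφint2,
      Ioc_union_Ioi_eq_Ioi hu0.le]
  have hm1 : ∫ t in Ioc 0 u, φ t ≤ ∫ t in Ioc 0 u, g1 t :=
    setIntegral_mono_on hφint1 hg1int measurableSet_Ioc
      (fun t ht => (hbound t ht.1).trans (min_le_left _ _))
  have hm2 : ∫ t in Ioi u, φ t ≤ ∫ t in Ioi u, g2 t :=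
    setIntegral_mono_on hφint2 hg2int measurableSet_Ioi
      (fun t ht => (hbound t (lt_trans hu0 ht)).trans (min_le_right _ _))
  -- final arithmetic
  have h1c : 1 - c = B * K / (A + B * K) := by
    rw [hc]; field_simp; ring
  have hlogeq : Real.log (1 + A / (B * K)) = -Real.log (1 - c) := by
    rw [← Real.log_inv]
    congr 1
    rw [h1c]
    field_simp
    ring
  have hFu : F u = B * (Real.log (1 - c) + c) := by
    rw [hF]; simp only []; rw [hexp]
  have hfinal : (A / K - A / K * c) + (0 - F u) = B * Real.log (1 + A / (B * K)) := by
    rw [hFu, hlogeq]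
    have hAc : A / K - A / K * c - B * c = 0 := by
      rw [hc]; field_simp; ring
    ring_nf
    ring_nf at hAc
    linarith
  rw [hsplit]
  calc (∫ t in Ioc 0 u, φ t) + ∫ t in Ioi u, φ t
      ≤ (∫ t in Ioc 0 u, g1 t) + ∫ t in Ioi u, g2 t := add_le_add hm1 hm2
    _ = B * Real.log (1 + A / (B * K)) := by rw [hI1, hI2, hfinal]
end

section
/- Let K, B > 0, A ≥ 0, C ≥ 0, and let φ : (0, ∞) → [0, ∞) be measurable with φ(t) ≤ min( A·e^{−Kt}, C·e^{−Kt} + B·K/(e^{Kt}(e^{Kt} − 1)) ) for all t > 0. Then ∫₀^∞ φ(t) dt ≤ min(A, C)/K + B·log(1 + max(A − C, 0)/(B·K)). -/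
open MeasureTheory Set Filter

private lemma expNeg_hasDerivAt (K x : ℝ) :
    HasDerivAt (fun t => Real.exp (-K*t)) (-K * Real.exp (-K*x)) x := by
  have h : HasDerivAt (fun t : ℝ => -K * t) (-K) x := by
    simpa using (hasDerivAt_id x).const_mul (-K)
  simpa [mul_comm] using h.exp

private lemma tendsto_expNeg (K : ℝ) (hK : 0 < K) :
    Tendsto (fun t => Real.exp (-K*t)) atTop (nhds 0) := by
  have h1 : Tendsto (fun t : ℝ => K * t) atTop atTop := by
    exact Tendsto.const_mul_atTop hK tendsto_id
  have h2 := Real.tendsto_exp_neg_atTop_nhds_zero.comp h1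
  exact h2.congr fun t => by simp [Function.comp, neg_mul]

private lemma one_lt_expKx (K x : ℝ) (hK : 0 < K) (hx : 0 < x) :
    1 < Real.exp (K * x) := by
  rw [show (1:ℝ) = Real.exp 0 from Real.exp_zero.symm]
  exact Real.exp_lt_exp.2 (mul_pos hK hx)

theorem hsi_deterministic_general (K A B C : ℝ) (hK : 0 < K) (hB : 0 < B)
    (hA : 0 ≤ A) (hC : 0 ≤ C)
    (φ : ℝ → ℝ) (hmeas : Measurable φ) (hφ : ∀ t > 0, 0 ≤ φ t)
    (hbound : ∀ t > 0,
      φ t ≤ min (A * Real.exp (-K * t))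
        (C * Real.exp (-K * t) + B * K / (Real.exp (K * t) * (Real.exp (K * t) - 1)))) :
    ∫ t in Set.Ioi (0 : ℝ), φ t
      ≤ min A C / K + B * Real.log (1 + max (A - C) 0 / (B * K)) := by
  have hexpint : IntegrableOn (fun t => A * Real.exp (-K * t)) (Ioi (0:ℝ)) :=
    (exp_neg_integrableOn_Ioi 0 hK).const_mul A
  have hintφ : IntegrableOn φ (Ioi (0:ℝ)) := by
    refine Integrable.mono' hexpint hmeas.aestronglyMeasurable ?_
    refine (ae_restrict_iff' measurableSet_Ioi).2 (ae_of_all _ fun x hx => ?_)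
    rw [Real.norm_eq_abs, abs_of_nonneg (hφ x hx)]
    exact (hbound x hx).trans (min_le_left _ _)
  by_cases hAC : A ≤ C
  · -- easy case: use the first bound everywhere
    have h1 : min A C = A := min_eq_left hAC
    have h2 : max (A - C) 0 = 0 := max_eq_right (sub_nonpos.2 hAC)
    rw [h1, h2]
    simp only [zero_div, add_zero, Real.log_one, mul_zero]
    have hval : ∫ t in Ioi (0:ℝ), A * Real.exp (-K * t) = A / K := by
      have hderiv : ∀ x ∈ Ici (0:ℝ),
          HasDerivAt (fun t => -(A/K) * Real.exp (-K*t)) (A * Real.exp (-K * x)) x := by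
        intro x _
        have := (expNeg_hasDerivAt K x).const_mul (-(A/K))
        refine this.congr_deriv ?_
        rw [← mul_assoc, neg_mul_neg, div_mul_cancel₀ A hK.ne']
      have := integral_Ioi_of_hasDerivAt_of_tendsto' hderiv hexpint
        (((tendsto_expNeg K hK).const_mul (-(A/K))).congr (fun x => rfl))
      simp only [mul_zero] at this
      rw [this]
      simp
    calc ∫ t in Ioi (0:ℝ), φ t ≤ ∫ t in Ioi (0:ℝ), A * Real.exp (-K * t) := by
          refine setIntegral_mono_on hintφ hexpint measurableSet_Ioi fun x hx => ?_
          exact (hbound x hx).trans (min_le_left _ _)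
      _ = A / K := hval
  · push_neg at hAC
    set D := A - C with hD_def
    have hD : 0 < D := sub_pos.2 hAC
    have hBK : 0 < B * K := mul_pos hB hK
    have hBKD : 0 < B * K + D := by linarith
    set s := D / (B * K + D) with hs_def
    have hs0 : 0 < s := div_pos hD hBKD
    have hs1 : s < 1 := (div_lt_one hBKD).2 (by linarith)
    set u := Real.log ((B * K + D) / D) / K with hu_def
    have hr1 : (1:ℝ) < (B * K + D) / D := (one_lt_div hD).2 (by linarith)
    have hu : 0 < u := div_pos (Real.log_pos hr1) hK
    have hsu : Real.exp (-K * u) = s := by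
      rw [hu_def]
      rw [show -K * (Real.log ((B * K + D) / D) / K) = -Real.log ((B * K + D) / D) by
        field_simp]
      rw [Real.exp_neg, Real.exp_log (by positivity), inv_div, hs_def]
    -- the antiderivative on the tail
    set G : ℝ → ℝ := fun t => -(C/K) * Real.exp (-K*t)
        + B * Real.log (1 - Real.exp (-K*t)) + B * Real.exp (-K*t) with hG_def
    set g2 : ℝ → ℝ := fun x => C * Real.exp (-K * x)
        + B * K / (Real.exp (K * x) * (Real.exp (K * x) - 1)) with hg2_def
    have hGderiv : ∀ x ∈ Ici u, HasDerivAt G (g2 x) x := by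
      intro x hx
      have hx0 : 0 < x := lt_of_lt_of_le hu hx
      have hEgt1 : (1:ℝ) < Real.exp (K * x) := one_lt_expKx K x hK hx0
      have hEinv : Real.exp (-K * x) = (Real.exp (K * x))⁻¹ := by
        rw [← Real.exp_neg]; ring_nf
      have hE1 : Real.exp (-K * x) < 1 := by
        rw [hEinv]
        exact inv_lt_one_of_one_lt₀ hEgt1
      have hne : 1 - Real.exp (-K*x) ≠ 0 := by
        simp only [neg_mul] at hE1 ⊢
        intro h; rw [sub_eq_zero] at h; exact absurd h.symm hE1.ne
      have he := expNeg_hasDerivAt K x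
      have hlog := ((hasDerivAt_const x (1:ℝ)).sub he).log hne
      have hcomb := ((he.const_mul (-(C/K))).add (hlog.const_mul B)).add (he.const_mul B)
      rw [hG_def, hg2_def]
      refine hcomb.congr_deriv ?_
      have he0' : Real.exp (K * x) ≠ 0 := (Real.exp_pos _).ne'
      have he1' : Real.exp (K * x) - 1 ≠ 0 := sub_ne_zero.2 hEgt1.ne'
      have hne' : 1 - (Real.exp (K * x))⁻¹ ≠ 0 := by rw [← hEinv]; exact hne
      simp only [neg_mul, Real.exp_neg, Pi.sub_apply]
      field_simp
      ring
    have hg2nonneg : ∀ x ∈ Ioi u, 0 ≤ g2 x := by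
      intro x hx
      have hx0 : 0 < x := hu.trans hx
      have hEgt1 : (1:ℝ) < Real.exp (K * x) := one_lt_expKx K x hK hx0
      have hp : 0 < Real.exp (K * x) * (Real.exp (K * x) - 1) := by
        have := Real.exp_pos (K * x); nlinarith
      rw [hg2_def]
      have h1 : 0 ≤ C * Real.exp (-K * x) := by positivity
      have h2 : 0 ≤ B * K / (Real.exp (K * x) * (Real.exp (K * x) - 1)) :=
        div_nonneg hBK.le hp.le
      exact add_nonneg h1 h2
    have hGtend : Tendsto G atTop (nhds 0) := by
      have he0 := tendsto_expNeg K hK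
      have hlog0 : Tendsto (fun t => Real.log (1 - Real.exp (-K*t))) atTop (nhds 0) := by
        have h1 : Tendsto (fun t => 1 - Real.exp (-K*t)) atTop (nhds 1) := by
          simpa using tendsto_const_nhds.sub he0
        have := (Real.continuousAt_log one_ne_zero).tendsto.comp h1
        rw [Real.log_one] at this
        exact this
      have hGt := ((he0.const_mul (-(C/K))).add (hlog0.const_mul B)).add (he0.const_mul B)
      simp only [mul_zero, add_zero] at hGt
      rw [hG_def]
      exact hGt
    have hg2int : IntegrableOn g2 (Ioi u) :=
      integrableOn_Ioi_deriv_of_nonneg' hGderiv hg2nonneg hGtend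
    have hg2val : ∫ x in Ioi u, g2 x = (C/K) * s - B * Real.log (1 - s) - B * s := by
      rw [integral_Ioi_of_hasDerivAt_of_nonneg' hGderiv hg2nonneg hGtend]
      rw [hG_def]
      simp only [hsu]
      ring
    -- first piece
    have hcont : Continuous (fun t => A * Real.exp (-K * t)) :=
      continuous_const.mul (Real.continuous_exp.comp (continuous_const.mul continuous_id))
    have hexpintIoc : IntegrableOn (fun t => A * Real.exp (-K * t)) (Ioc 0 u) :=
      hexpint.mono_set Ioc_subset_Ioi_self
    have hpiece1 : ∫ t in Ioc 0 u, φ t ≤ ∫ t in Ioc 0 u, A * Real.exp (-K * t) := by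
      refine setIntegral_mono_on (hintφ.mono_set Ioc_subset_Ioi_self) hexpintIoc
        measurableSet_Ioc fun x hx => ?_
      exact (hbound x hx.1).trans (min_le_left _ _)
    have hval1 : ∫ t in Ioc 0 u, A * Real.exp (-K * t) = A/K * (1 - s) := by
      rw [← intervalIntegral.integral_of_le hu.le]
      have hderiv : ∀ x ∈ uIcc (0:ℝ) u,
          HasDerivAt (fun t => -(A/K) * Real.exp (-K*t)) (A * Real.exp (-K * x)) x := by
        intro x _
        have := (expNeg_hasDerivAt K x).const_mul (-(A/K))
        refine this.congr_deriv ?_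
        rw [← mul_assoc, neg_mul_neg, div_mul_cancel₀ A hK.ne']
      rw [intervalIntegral.integral_eq_sub_of_hasDerivAt hderiv
        (hcont.intervalIntegrable _ _)]
      rw [hsu]
      simp only [mul_zero, Real.exp_zero]
      field_simp
      ring
    have hpiece2 : ∫ t in Ioi u, φ t ≤ ∫ x in Ioi u, g2 x := by
      refine setIntegral_mono_on (hintφ.mono_set (Ioi_subset_Ioi hu.le)) hg2int
        measurableSet_Ioi fun x hx => ?_
      exact (hbound x (hu.trans hx)).trans (min_le_right _ _)
    have hsplit : ∫ t in Ioi (0:ℝ), φ t = (∫ t in Ioc 0 u, φ t) + ∫ t in Ioi u, φ t := by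
      rw [← setIntegral_union (Ioc_disjoint_Ioi le_rfl) measurableSet_Ioi
        (hintφ.mono_set Ioc_subset_Ioi_self) (hintφ.mono_set (Ioi_subset_Ioi hu.le)),
        Ioc_union_Ioi_eq_Ioi hu.le]
    -- final arithmetic
    have hminAC : min A C = C := min_eq_right hAC.le
    have hmaxD : max (A - C) 0 = D := max_eq_left hD.le
    have h1s : 1 - s = B * K / (B * K + D) := by
      rw [hs_def]; field_simp; ring
    have hplus : 1 + D / (B * K) = (B * K + D) / (B * K) := by
      field_simp
    have hlogeq : Real.log (1 - s) = -Real.log (1 + D / (B * K)) := by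
      rw [h1s, hplus, ← Real.log_inv, inv_div]
    have hlin : A/K * (1 - s) + ((C/K) * s - B * s) = C / K := by
      rw [h1s, hs_def]
      field_simp
      ring
    rw [hsplit, hminAC, hmaxD]
    calc (∫ t in Ioc 0 u, φ t) + ∫ t in Ioi u, φ t
        ≤ A/K * (1 - s) + ((C/K) * s - B * Real.log (1 - s) - B * s) := by
          rw [← hval1, ← hg2val]; exact add_le_add hpiece1 hpiece2
      _ = C / K + B * Real.log (1 + D / (B * K)) := by
          rw [hlogeq]; linarith [hlin]
end
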